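/- Let R = ℚ[z₁,…,z_m] be the polynomial ring in m variables, let k ≥ 1, and let a, b : {1,…,k} → R satisfy Σᵢ aᵢbᵢ = 0. Suppose that for some index j the entry bⱼ equals z₁ − c, where c ∈ ℚ[z₂,…,z_m] does not involve z₁, and let π : R → R' = ℚ[z₂,…,z_m] be the ℚ-algebra homomorphism with π(z₁) = c and π(zᵢ) = zᵢ for i ≥ 2. Let M = K(a,b) be the folded Koszul complex over R, regarded as a ℤ/2-graded complex of R'-modules, and let M' be the folded Koszul complex over R' whose rows are (π(aᵢ), π(bᵢ)) for i ≠ j (one has Σ_{i≠j} π(aᵢ)π(bᵢ) = 0 since π(bⱼ) = 0). Then the R'-linear map Φ : M → M' defined on basis elements by Φ(u·e_ε) = π(u)·e_{ε′} if εⱼ = 0 (where ε′ ∈ {0,1}^{k−1} is ε with its j-th coordinate deleted) and Φ(u·e_ε) = 0 if εⱼ = 1 (u ∈ R), is a chain map of ℤ/2-graded complexes and is a quasi-isomorphism: it induces isomorphisms of R'-modules on the homology in both ℤ/2-degrees. -/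

import Mathlib

open Finset

/-- The sign `(−1)^{ε₁+⋯+ε_{i−1}}` appearing in the Koszul differential. -/
def koszulSign (R : Type*) [CommRing R] {k : ℕ} (i : Fin k) (ε : Fin k → Bool) : R :=
  (-1 : R) ^ ((Finset.univ.filter (fun l : Fin k => l < i ∧ ε l = true)).card)

/-- The entry `tᵢ(ε)`: `aᵢ` if `εᵢ = 0`, `bᵢ` if `εᵢ = 1`. -/
def koszulEntry {R : Type*} [CommRing R] {k : ℕ} (a b : Fin k → R) (i : Fin k)
    (ε : Fin k → Bool) : R :=
  if ε i then b i else a i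

/-- `ε ⊕ δᵢ`: flip the `i`-th coordinate of `ε`. -/
def flipAt {k : ℕ} (i : Fin k) (ε : Fin k → Bool) : Fin k → Bool :=
  Function.update ε i (!ε i)

/-- The differential of the folded Koszul complex `K(a,b)` on the free module with
basis `{e_ε : ε ∈ {0,1}^k}`, realized as `(Fin k → Bool) → R`:
`d(e_ε) = Σᵢ (−1)^{ε₁+⋯+ε_{i−1}} tᵢ(ε) e_{ε⊕δᵢ}`. -/
noncomputable def koszulD {R : Type*} [CommRing R] {k : ℕ} (a b : Fin k → R) :
    ((Fin k → Bool) → R) →ₗ[R] ((Fin k → Bool) → R) where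
  toFun f := fun η => ∑ i : Fin k,
    koszulSign R i (flipAt i η) * koszulEntry a b i (flipAt i η) * f (flipAt i η)
  map_add' f g := by
    funext η
    simp only [Pi.add_apply, mul_add]
    rw [Finset.sum_add_distrib]
  map_smul' r f := by
    funext η
    simp only [Pi.smul_apply, smul_eq_mul, RingHom.id_apply]
    rw [Finset.mul_sum]
    exact Finset.sum_congr rfl fun i _ => by ring

/-- The parity of `ε ∈ {0,1}^k`, as an element of `ℤ/2`. -/
def bparity {k : ℕ} (ε : Fin k → Bool) : ZMod 2 :=
  ((Finset.univ.filter (fun i : Fin k => ε i = true)).card : ZMod 2)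

/-- The degree-`p` graded part of the folded Koszul complex: functions supported on
basis elements `e_ε` with `ε` of parity `p`. -/
def gradedPart (R : Type*) [CommRing R] {k : ℕ} (p : ZMod 2) :
    Submodule R ((Fin k → Bool) → R) where
  carrier := {f | ∀ ε, bparity ε ≠ p → f ε = 0}
  add_mem' := by
    intro f g hf hg ε hε
    simp [hf ε hε, hg ε hε]
  zero_mem' := by
    intro ε _
    rfl
  smul_mem' := by
    intro r f hf ε hε
    simp [hf ε hε]

/-- Cycles of degree `p`: kernel of the differential intersected with the graded part. -/
noncomputable def koszulCycles {R : Type*} [CommRing R] {k : ℕ} (a b : Fin k → R)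
    (p : ZMod 2) : Submodule R ((Fin k → Bool) → R) :=
  LinearMap.ker (koszulD a b) ⊓ gradedPart R p

/-- Boundaries of degree `p`: image of the degree-`(p+1)` part under the differential. -/
noncomputable def koszulBoundaries {R : Type*} [CommRing R] {k : ℕ} (a b : Fin k → R)
    (p : ZMod 2) : Submodule R ((Fin k → Bool) → R) :=
  Submodule.map (koszulD a b) (gradedPart R (p + 1))

/-- The homology of the folded Koszul complex in `ℤ/2`-degree `p`. -/
noncomputable abbrev KoszulHomology {R : Type*} [CommRing R] {k : ℕ} (a b : Fin k → R)
    (p : ZMod 2) :=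
  koszulCycles a b p ⧸ ((koszulBoundaries a b p).comap (koszulCycles a b p).subtype)
open MvPolynomial

/-- The `ℚ`-algebra homomorphism `π : ℚ[z₁,…,z_{m+1}] → ℚ[z₂,…,z_{m+1}]` sending the
first variable `z₁` to `c` and fixing the remaining variables (here `ℚ[z₂,…,z_{m+1}]`
is modeled as `MvPolynomial (Fin m) ℚ`, with the inclusion into `MvPolynomial (Fin (m+1)) ℚ`
given by `rename Fin.succ`). -/
noncomputable def elimHom (m : ℕ) (c : MvPolynomial (Fin m) ℚ) :
    MvPolynomial (Fin (m + 1)) ℚ →ₐ[ℚ] MvPolynomial (Fin m) ℚ :=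
  MvPolynomial.aeval (Fin.cases c MvPolynomial.X)

/-- The map `Φ : K(a,b) → M'` defined on basis elements by
`Φ(u·e_ε) = π(u)·e_{ε'}` if `εⱼ = 0` (where `ε'` is `ε` with its `j`-th coordinate
deleted) and `Φ(u·e_ε) = 0` if `εⱼ = 1`. -/
noncomputable def elimPhi (m k : ℕ) (c : MvPolynomial (Fin m) ℚ) (j : Fin (k + 1))
    (f : (Fin (k + 1) → Bool) → MvPolynomial (Fin (m + 1)) ℚ) :
    (Fin k → Bool) → MvPolynomial (Fin m) ℚ :=
  fun ε => elimHom m c (f (j.insertNth false ε))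

section Helpers
variable {k : ℕ}

lemma flipAt_apply_self (i : Fin k) (ε : Fin k → Bool) : flipAt i ε i = !ε i :=
  Function.update_self i _ ε

lemma flipAt_apply_ne (i : Fin k) (ε : Fin k → Bool) {l : Fin k} (h : l ≠ i) :
    flipAt i ε l = ε l :=
  Function.update_of_ne h _ ε

lemma flipAt_flipAt_self (i : Fin k) (ε : Fin k → Bool) : flipAt i (flipAt i ε) = ε := by
  funext l
  rcases eq_or_ne l i with rfl | h
  · rw [flipAt_apply_self, flipAt_apply_self, Bool.not_not]
  · rw [flipAt_apply_ne _ _ h, flipAt_apply_ne _ _ h]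

lemma flipAt_comm {i l : Fin k} (h : i ≠ l) (ε : Fin k → Bool) :
    flipAt i (flipAt l ε) = flipAt l (flipAt i ε) := by
  funext m
  rcases eq_or_ne m i with rfl | hmi
  · rw [flipAt_apply_self, flipAt_apply_ne _ _ h, flipAt_apply_ne _ _ h, flipAt_apply_self]
  · rcases eq_or_ne m l with rfl | hml
    · rw [flipAt_apply_ne _ _ hmi, flipAt_apply_self, flipAt_apply_self,
        flipAt_apply_ne _ _ hmi]
    · rw [flipAt_apply_ne _ _ hmi, flipAt_apply_ne _ _ hml, flipAt_apply_ne _ _ hml,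
        flipAt_apply_ne _ _ hmi]

variable (R : Type*) [CommRing R]

lemma koszulSign_prod (i : Fin k) (ε : Fin k → Bool) :
    koszulSign R i ε = ∏ l : Fin k, if l < i ∧ ε l = true then (-1 : R) else 1 := by
  rw [koszulSign, Finset.prod_ite, Finset.prod_const, Finset.prod_const, one_pow, mul_one]

lemma koszulSign_mul_self (i : Fin k) (ε : Fin k → Bool) :
    koszulSign R i ε * koszulSign R i ε = 1 := by
  rw [koszulSign, ← mul_pow, neg_mul_neg, one_mul, one_pow]

lemma koszulSign_flipAt_of_not_lt {i l : Fin k} (h : ¬ l < i) (ε : Fin k → Bool) :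
    koszulSign R i (flipAt l ε) = koszulSign R i ε := by
  rw [koszulSign, koszulSign]
  congr 2
  apply Finset.filter_congr
  intro m _
  rcases eq_or_ne m l with rfl | hml
  · simp [h]
  · rw [flipAt_apply_ne _ _ hml]

lemma koszulSign_flipAt_self (i : Fin k) (ε : Fin k → Bool) :
    koszulSign R i (flipAt i ε) = koszulSign R i ε :=
  koszulSign_flipAt_of_not_lt R (lt_irrefl i) ε

lemma koszulSign_flipAt_of_lt {i l : Fin k} (h : l < i) (ε : Fin k → Bool) :
    koszulSign R i (flipAt l ε) = - koszulSign R i ε := by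
  rw [koszulSign_prod, koszulSign_prod]
  rw [← Finset.mul_prod_erase Finset.univ _ (Finset.mem_univ l),
    ← Finset.mul_prod_erase Finset.univ
      (fun m => if m < i ∧ ε m = true then (-1 : R) else 1) (Finset.mem_univ l)]
  rw [show (Finset.univ.erase l).prod
      (fun m => if m < i ∧ flipAt l ε m = true then (-1 : R) else 1)
      = (Finset.univ.erase l).prod (fun m => if m < i ∧ ε m = true then (-1 : R) else 1) from
    Finset.prod_congr rfl fun m hm => by
      rw [flipAt_apply_ne _ _ (Finset.ne_of_mem_erase hm)]]
  rw [flipAt_apply_self]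
  cases hεl : ε l <;> simp [h, hεl]

end Helpers

section Parity
variable {k : ℕ}

lemma bparity_sum (ε : Fin k → Bool) :
    bparity ε = ∑ i : Fin k, if ε i = true then (1 : ZMod 2) else 0 := by
  rw [bparity, Finset.card_filter, Nat.cast_sum]
  exact Finset.sum_congr rfl fun i _ => by split <;> simp

lemma bparity_flipAt (i : Fin k) (ε : Fin k → Bool) :
    bparity (flipAt i ε) = bparity ε + 1 := by
  rw [bparity_sum, bparity_sum,
    ← Finset.add_sum_erase Finset.univ _ (Finset.mem_univ i),
    ← Finset.add_sum_erase Finset.univ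
      (fun l => if ε l = true then (1 : ZMod 2) else 0) (Finset.mem_univ i)]
  rw [show (Finset.univ.erase i).sum
      (fun l => if flipAt i ε l = true then (1 : ZMod 2) else 0)
      = (Finset.univ.erase i).sum (fun l => if ε l = true then (1 : ZMod 2) else 0) from
    Finset.sum_congr rfl fun l hl => by
      rw [flipAt_apply_ne _ _ (Finset.ne_of_mem_erase hl)]]
  rw [flipAt_apply_self]
  cases hεi : ε i <;> simp
  · exact add_comm _ _
  · rw [add_comm (1 : ZMod 2), add_assoc, show (1 + 1 : ZMod 2) = 0 by decide, add_zero]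

lemma zmod2_add_one_ne {p q : ZMod 2} (h : q ≠ p + 1) : q + 1 ≠ p := by
  intro hq
  apply h
  rw [← hq, add_assoc, show (1 + 1 : ZMod 2) = 0 by decide, add_zero]

end Parity

section InsertNth
variable {k : ℕ}

lemma flipAt_insertNth (j : Fin (k + 1)) (i : Fin k) (x : Bool) (γ : Fin k → Bool) :
    flipAt (j.succAbove i) (j.insertNth x γ) = j.insertNth x (flipAt i γ) := by
  funext l
  rcases eq_or_ne l j with h | hlj
  · subst h
    rw [flipAt_apply_ne _ _ (Fin.succAbove_ne l i).symm, Fin.insertNth_apply_same,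
      Fin.insertNth_apply_same]
  · obtain ⟨l', rfl⟩ := Fin.exists_succAbove_eq hlj
    rcases eq_or_ne l' i with rfl | hl'i
    · rw [flipAt_apply_self, Fin.insertNth_apply_succAbove, Fin.insertNth_apply_succAbove,
        flipAt_apply_self]
    · rw [flipAt_apply_ne _ _ (fun hh => hl'i (Fin.succAbove_right_injective hh)),
        Fin.insertNth_apply_succAbove, Fin.insertNth_apply_succAbove,
        flipAt_apply_ne _ _ hl'i]

lemma bparity_insertNth_false (j : Fin (k + 1)) (γ : Fin k → Bool) :
    bparity (j.insertNth false γ) = bparity γ := by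
  rw [bparity_sum, bparity_sum, Fin.sum_univ_succAbove _ j, Fin.insertNth_apply_same]
  simp only [Fin.insertNth_apply_succAbove]
  simp

lemma koszulSign_insertNth (R : Type*) [CommRing R] (j : Fin (k + 1)) (i : Fin k)
    (γ : Fin k → Bool) :
    koszulSign R (j.succAbove i) (j.insertNth false γ) = koszulSign R i γ := by
  rw [koszulSign_prod, koszulSign_prod, Fin.prod_univ_succAbove _ j,
    Fin.insertNth_apply_same]
  simp only [Fin.insertNth_apply_succAbove, Fin.succAbove_lt_succAbove_iff]
  simp

lemma flipAt_insertNth_same (j : Fin (k + 1)) (γ : Fin k → Bool) :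
    flipAt j (j.insertNth false γ) = j.insertNth true γ := by
  funext l
  rcases eq_or_ne l j with rfl | hlj
  · rw [flipAt_apply_self, Fin.insertNth_apply_same, Fin.insertNth_apply_same]; rfl
  · obtain ⟨l', rfl⟩ := Fin.exists_succAbove_eq hlj
    rw [flipAt_apply_ne _ _ hlj, Fin.insertNth_apply_succAbove, Fin.insertNth_apply_succAbove]

lemma insertNth_false_comp (j : Fin (k + 1)) (η : Fin (k + 1) → Bool) (h : η j = false) :
    j.insertNth false (fun i => η (j.succAbove i)) = η := by
  funext l
  rcases eq_or_ne l j with rfl | hlj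
  · rw [Fin.insertNth_apply_same, h]
  · obtain ⟨l', rfl⟩ := Fin.exists_succAbove_eq hlj
    rw [Fin.insertNth_apply_succAbove]

end InsertNth

section DLemmas
variable {R : Type*} [CommRing R] {k : ℕ} (a b : Fin k → R)

lemma koszulD_apply (f : (Fin k → Bool) → R) (η : Fin k → Bool) :
    koszulD a b f η = ∑ i : Fin k,
      koszulSign R i (flipAt i η) * koszulEntry a b i (flipAt i η) * f (flipAt i η) := rfl

lemma koszulEntry_flipAt_ne {i l : Fin k} (h : i ≠ l) (γ : Fin k → Bool) :
    koszulEntry a b i (flipAt l γ) = koszulEntry a b i γ := by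
  rw [koszulEntry, koszulEntry, flipAt_apply_ne _ _ h]

lemma koszulEntry_mul_flip (i : Fin k) (γ : Fin k → Bool) :
    koszulEntry a b i (flipAt i γ) * koszulEntry a b i γ = a i * b i := by
  rw [koszulEntry, koszulEntry, flipAt_apply_self]
  cases h : γ i <;> simp [mul_comm]

lemma koszulEntry_flipAt_flipAt_ne {i l : Fin k} (h : i ≠ l) (γ : Fin k → Bool) :
    koszulEntry a b i (flipAt i (flipAt l γ)) = koszulEntry a b i (flipAt i γ) := by
  rw [koszulEntry, koszulEntry, flipAt_apply_self, flipAt_apply_self, flipAt_apply_ne _ _ h]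

/-- The differential sends degree `q` to degree `q+1`. -/
lemma koszulD_graded {q : ZMod 2} {f : (Fin k → Bool) → R}
    (hf : ∀ ε, bparity ε ≠ q → f ε = 0) :
    ∀ η, bparity η ≠ q + 1 → koszulD a b f η = 0 := by
  intro η hη
  rw [koszulD_apply]
  apply Finset.sum_eq_zero
  intro i _
  rw [hf (flipAt i η) (by rw [bparity_flipAt]; exact zmod2_add_one_ne hη), mul_zero]

lemma koszulD_koszulD [IsDomain R] [CharZero R] (hab : ∑ i, a i * b i = 0)
    (f : (Fin k → Bool) → R) : koszulD a b (koszulD a b f) = 0 := by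
  funext η
  rw [koszulD_apply]
  have expand : ∀ i : Fin k,
      koszulSign R i (flipAt i η) * koszulEntry a b i (flipAt i η) * koszulD a b f (flipAt i η)
      = ∑ l : Fin k, koszulSign R i (flipAt i η) * koszulEntry a b i (flipAt i η) *
          (koszulSign R l (flipAt l (flipAt i η)) * koszulEntry a b l (flipAt l (flipAt i η)) *
            f (flipAt l (flipAt i η))) := by
    intro i
    rw [koszulD_apply, Finset.mul_sum]
  rw [Finset.sum_congr rfl fun i _ => expand i]
  set T : Fin k → Fin k → R := fun i l =>
    koszulSign R i (flipAt i η) * koszulEntry a b i (flipAt i η) *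
      (koszulSign R l (flipAt l (flipAt i η)) * koszulEntry a b l (flipAt l (flipAt i η)) *
        f (flipAt l (flipAt i η))) with hT
  show ∑ i : Fin k, ∑ l : Fin k, T i l = (0 : ((Fin k → Bool) → R)) η
  have diag : ∀ i : Fin k, T i i = a i * b i * f η := by
    intro i
    rw [hT]
    simp only [flipAt_flipAt_self, koszulSign_flipAt_self]
    have h1 := koszulSign_mul_self R i η
    have h2 := koszulEntry_mul_flip a b i η
    calc koszulSign R i η * koszulEntry a b i (flipAt i η) *
          (koszulSign R i η * koszulEntry a b i η * f η)
        = (koszulSign R i η * koszulSign R i η) *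
            (koszulEntry a b i (flipAt i η) * koszulEntry a b i η) * f η := by ring
      _ = a i * b i * f η := by rw [h1, h2, one_mul]
  have skew : ∀ i l : Fin k, i ≠ l → T i l = - T l i := by
    intro i l h
    rw [hT]
    simp only
    rw [show flipAt l (flipAt i η) = flipAt i (flipAt l η) from (flipAt_comm h η).symm]
    rw [koszulEntry_flipAt_ne a b (Ne.symm h) (flipAt l η),
      koszulEntry_flipAt_flipAt_ne a b h η]
    simp only [koszulSign_flipAt_self]
    rcases lt_or_gt_of_ne h with hil | hli
    · rw [koszulSign_flipAt_of_lt R hil (flipAt l η), koszulSign_flipAt_self,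
        koszulSign_flipAt_of_not_lt R (lt_asymm hil) η]
      ring
    · rw [koszulSign_flipAt_of_not_lt R (lt_asymm hli) (flipAt l η), koszulSign_flipAt_self,
        koszulSign_flipAt_of_lt R hli η]
      ring
  have split : ∀ i : Fin k, ∑ l : Fin k, T i l = T i i + ∑ l ∈ Finset.univ.erase i, T i l := by
    intro i
    rw [Finset.add_sum_erase _ _ (Finset.mem_univ i)]
  rw [Finset.sum_congr rfl fun i _ => split i, Finset.sum_add_distrib]
  have hdiag : ∑ i : Fin k, T i i = 0 := by
    rw [Finset.sum_congr rfl fun i _ => diag i, ← Finset.sum_mul, hab, zero_mul]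
  rw [hdiag, zero_add]
  have hoff : ∑ i : Fin k, ∑ l ∈ Finset.univ.erase i, T i l = 0 := by
    have hswap : ∑ i : Fin k, ∑ l ∈ Finset.univ.erase i, T i l
        = ∑ l : Fin k, ∑ i ∈ Finset.univ.erase l, T i l := by
      apply Finset.sum_comm'
      intro x y
      simp only [Finset.mem_univ, true_and, and_true, Finset.mem_erase]
      exact ne_comm
    have hneg : ∑ i : Fin k, ∑ l ∈ Finset.univ.erase i, T i l
        = - ∑ i : Fin k, ∑ l ∈ Finset.univ.erase i, T i l := by
      nth_rewrite 1 [hswap]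
      rw [← Finset.sum_neg_distrib]
      apply Finset.sum_congr rfl
      intro l _
      rw [← Finset.sum_neg_distrib]
      apply Finset.sum_congr rfl
      intro i hi
      rw [skew i l (Finset.ne_of_mem_erase hi)]
    have h2 : (∑ i : Fin k, ∑ l ∈ Finset.univ.erase i, T i l)
        + ∑ i : Fin k, ∑ l ∈ Finset.univ.erase i, T i l = 0 := by
      nth_rewrite 1 [hneg]
      rw [neg_add_cancel]
    exact add_self_eq_zero.mp h2
  rw [hoff]
  rfl
end DLemmas

section Elim
variable (m : ℕ) (c : MvPolynomial (Fin m) ℚ)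

lemma elim_rename (u : MvPolynomial (Fin m) ℚ) :
    elimHom m c (MvPolynomial.rename Fin.succ u) = u := by
  rw [elimHom, MvPolynomial.aeval_rename]
  have : (Fin.cases c MvPolynomial.X ∘ Fin.succ : Fin m → MvPolynomial (Fin m) ℚ)
      = MvPolynomial.X := by
    funext i; simp
  rw [this]
  simp [MvPolynomial.aeval_X_left_apply]

lemma elim_X_zero : elimHom m c (MvPolynomial.X 0) = c := by
  rw [elimHom, MvPolynomial.aeval_X]; rfl

lemma elim_w : elimHom m c (MvPolynomial.X 0 - MvPolynomial.rename Fin.succ c) = 0 := by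
  rw [map_sub, elim_X_zero, elim_rename, sub_self]

lemma w_ne : (MvPolynomial.X 0 - MvPolynomial.rename Fin.succ c :
    MvPolynomial (Fin (m + 1)) ℚ) ≠ 0 := by
  intro h
  have h2 := congrArg (MvPolynomial.aeval
    (Fin.cases (MvPolynomial.X 0 + MvPolynomial.rename Fin.succ c)
      (fun i => MvPolynomial.X i.succ) : Fin (m+1) → MvPolynomial (Fin (m+1)) ℚ)) h
  rw [map_sub, map_zero, MvPolynomial.aeval_X, MvPolynomial.aeval_rename] at h2
  have h3 : (Fin.cases (MvPolynomial.X 0 + MvPolynomial.rename Fin.succ c)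
      (fun i => MvPolynomial.X i.succ) ∘ Fin.succ : Fin m → MvPolynomial (Fin (m+1)) ℚ)
      = fun i => MvPolynomial.X i.succ := by funext i; simp
  rw [h3] at h2
  have h4 : (MvPolynomial.aeval (fun i => MvPolynomial.X i.succ :
      Fin m → MvPolynomial (Fin (m+1)) ℚ)) c = MvPolynomial.rename Fin.succ c := by
    rw [← MvPolynomial.aeval_X_left_apply (MvPolynomial.rename Fin.succ c),
      MvPolynomial.aeval_rename]; rfl
  rw [h4] at h2
  simp only [Fin.cases_zero] at h2
  rw [add_sub_cancel_right] at h2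
  exact MvPolynomial.X_ne_zero 0 h2

lemma w_dvd_sub (u : MvPolynomial (Fin (m + 1)) ℚ) :
    (MvPolynomial.X 0 - MvPolynomial.rename Fin.succ c) ∣
      (u - MvPolynomial.rename Fin.succ (elimHom m c u)) := by
  induction u using MvPolynomial.induction_on with
  | C r =>
      have : elimHom m c (MvPolynomial.C r) = MvPolynomial.C r := by
        simp [elimHom]
      rw [this]
      simp only [MvPolynomial.rename_C, sub_self]
      exact dvd_zero _
  | add p q hp hq =>
      have : p + q - MvPolynomial.rename Fin.succ (elimHom m c (p + q))
          = (p - MvPolynomial.rename Fin.succ (elimHom m c p))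
            + (q - MvPolynomial.rename Fin.succ (elimHom m c q)) := by
        rw [map_add, map_add]; ring
      rw [this]
      exact dvd_add hp hq
  | mul_X p i hp =>
      have key : (MvPolynomial.X 0 - MvPolynomial.rename Fin.succ c) ∣
          (MvPolynomial.X i - MvPolynomial.rename Fin.succ (elimHom m c (MvPolynomial.X i))
            : MvPolynomial (Fin (m+1)) ℚ) := by
        induction i using Fin.cases with
        | zero =>
            rw [elim_X_zero]
        | succ i' =>
            have : elimHom m c (MvPolynomial.X i'.succ) = MvPolynomial.X i' := by
              rw [elimHom, MvPolynomial.aeval_X, Fin.cases_succ]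
            rw [this, MvPolynomial.rename_X, sub_self]
            exact dvd_zero _
      have : p * MvPolynomial.X i - MvPolynomial.rename Fin.succ (elimHom m c (p * MvPolynomial.X i))
          = MvPolynomial.X i * (p - MvPolynomial.rename Fin.succ (elimHom m c p))
            + MvPolynomial.rename Fin.succ (elimHom m c p) *
              (MvPolynomial.X i - MvPolynomial.rename Fin.succ (elimHom m c (MvPolynomial.X i))) := by
        rw [map_mul, map_mul]; ring
      rw [this]
      exact dvd_add (Dvd.dvd.mul_left hp _) (Dvd.dvd.mul_left key _)

lemma w_dvd (u : MvPolynomial (Fin (m + 1)) ℚ) (hu : elimHom m c u = 0) :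
    ∃ x, u = (MvPolynomial.X 0 - MvPolynomial.rename Fin.succ c) * x := by
  have h := w_dvd_sub m c u
  rw [hu, map_zero, sub_zero] at h
  exact h

end Elim

section Specific
variable (m k : ℕ) (c : MvPolynomial (Fin m) ℚ) (j : Fin (k + 1))
variable (a b : Fin (k + 1) → MvPolynomial (Fin (m + 1)) ℚ)

local notation "R" => MvPolynomial (Fin (m + 1)) ℚ
local notation "R'" => MvPolynomial (Fin m) ℚ
local notation "w" => (MvPolynomial.X 0 - MvPolynomial.rename Fin.succ c : MvPolynomial (Fin (m+1)) ℚ)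

lemma elim_koszulSign {n : ℕ} (i : Fin n) (ε : Fin n → Bool) :
    elimHom m c (koszulSign (MvPolynomial (Fin (m+1)) ℚ) i ε)
      = koszulSign (MvPolynomial (Fin m) ℚ) i ε := by
  rw [koszulSign, koszulSign, map_pow, map_neg, map_one]

variable (hbj : b j = MvPolynomial.X 0 - MvPolynomial.rename Fin.succ c)

include hbj in
lemma quadrant_kill (f : (Fin (k + 1) → Bool) → R)
    (hsupp : ∀ η, η j = false → f η = 0) (hcycle : koszulD a b f = 0) : f = 0 := by
  funext η
  show f η = 0
  by_cases hη : η j = false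
  · exact hsupp η hη
  · have hηt : η j = true := by revert hη; cases η j <;> simp
    have h0 : koszulD a b f (flipAt j η) = 0 := by rw [hcycle]; rfl
    rw [koszulD_apply] at h0
    rw [Finset.sum_eq_single j] at h0
    · rw [flipAt_flipAt_self] at h0
      have h1 : koszulSign R j η * (koszulSign R j η * koszulEntry a b j η * f η) = 0 := by
        rw [h0, mul_zero]
      rw [← mul_assoc, ← mul_assoc, koszulSign_mul_self, one_mul] at h1
      have h2 : koszulEntry a b j η = w := by rw [koszulEntry, hηt, if_pos rfl, hbj]
      rw [h2] at h1
      rcases mul_eq_zero.mp h1 with h3 | h3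
      · exact absurd h3 (w_ne m c)
      · exact h3
    · intro i _ hij
      have : f (flipAt i (flipAt j η)) = 0 := by
        apply hsupp
        rw [flipAt_apply_ne _ _ (fun hh : (j : Fin (k+1)) = i => hij hh.symm),
          flipAt_apply_self, hηt]
        rfl
      rw [this, mul_zero]
    · intro h; exact absurd (Finset.mem_univ j) h

include hbj in
lemma homotopy_step (p : ZMod 2) (f : (Fin (k + 1) → Bool) → R)
    (hN : ∀ η, η j = false → elimHom m c (f η) = 0)
    (hgr : ∀ η, bparity η ≠ p → f η = 0) :
    ∃ h : (Fin (k + 1) → Bool) → R,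
      (∀ η, η j = false → h η = 0) ∧
      (∀ η, bparity η ≠ p + 1 → h η = 0) ∧
      (∀ η, η j = false → koszulD a b h η = f η) := by
  have hv : ∀ γ : Fin (k + 1) → Bool, ∃ x, γ j = false → f γ = w * x := by
    intro γ
    by_cases hγ : γ j = false
    · obtain ⟨x, hx⟩ := w_dvd m c (f γ) (hN γ hγ)
      exact ⟨x, fun _ => hx⟩
    · exact ⟨0, fun hh => absurd hh hγ⟩
  choose v hvspec using hv
  refine ⟨fun η => if η j = true then koszulSign R j η * v (flipAt j η) else 0, ?_, ?_, ?_⟩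
  · intro η hη
    dsimp only
    rw [if_neg (by rw [hη]; exact Bool.false_ne_true)]
  · intro η hη
    dsimp only
    by_cases hηj : η j = true
    · rw [if_pos hηj]
      have hflipj : flipAt j η j = false := by rw [flipAt_apply_self, hηj]; rfl
      have hfz : f (flipAt j η) = 0 := by
        apply hgr
        rw [bparity_flipAt]
        exact zmod2_add_one_ne hη
      have := hvspec (flipAt j η) hflipj
      rw [hfz] at this
      have hv0 : v (flipAt j η) = 0 := by
        rcases mul_eq_zero.mp this.symm with h3 | h3
        · exact absurd h3 (w_ne m c)
        · exact h3
      rw [hv0, mul_zero]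
    · rw [if_neg hηj]
  · intro η hη
    rw [koszulD_apply, Finset.sum_eq_single j]
    all_goals (try dsimp only)
    · have hflipt : flipAt j η j = true := by rw [flipAt_apply_self, hη]; rfl
      rw [if_pos hflipt, flipAt_flipAt_self]
      have h2 : koszulEntry a b j (flipAt j η) = w := by
        rw [koszulEntry, hflipt, if_pos rfl, hbj]
      rw [h2]
      have h3 := koszulSign_mul_self R j (flipAt j η)
      calc koszulSign R j (flipAt j η) * w * (koszulSign R j (flipAt j η) * v η)
          = (koszulSign R j (flipAt j η) * koszulSign R j (flipAt j η)) * (w * v η) := by ring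
        _ = f η := by rw [h3, one_mul, ← hvspec η hη]
    · intro i _ hij
      have hf : flipAt i η j = false := by
        rw [flipAt_apply_ne _ _ (fun hh : (j : Fin (k+1)) = i => hij hh.symm), hη]
      rw [if_neg (by rw [hf]; exact Bool.false_ne_true), mul_zero]
    · intro h; exact absurd (Finset.mem_univ j) h

include hbj in
lemma N_acyclic (hab : ∑ i, a i * b i = 0) (p : ZMod 2) (f : (Fin (k + 1) → Bool) → R)
    (hN : ∀ η, η j = false → elimHom m c (f η) = 0)
    (hcycle : koszulD a b f = 0)
    (hgr : ∀ η, bparity η ≠ p → f η = 0) :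
    ∃ h : (Fin (k + 1) → Bool) → R,
      (∀ η, η j = false → h η = 0) ∧
      (∀ η, bparity η ≠ p + 1 → h η = 0) ∧
      koszulD a b h = f := by
  obtain ⟨h, h1, h2, h3⟩ := homotopy_step m k c j a b hbj p f hN hgr
  refine ⟨h, h1, h2, ?_⟩
  have hsub : koszulD a b (f - koszulD a b h) = 0 := by
    rw [map_sub, hcycle, koszulD_koszulD a b hab, sub_zero]
  have hsupp : ∀ η, η j = false → (f - koszulD a b h) η = 0 := by
    intro η hη
    show f η - koszulD a b h η = 0
    rw [h3 η hη, sub_self]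
  have := quadrant_kill m k c j a b hbj _ hsupp hsub
  have h4 : f - koszulD a b h = 0 := this
  funext η
  have := congrFun h4 η
  simp only [Pi.sub_apply, Pi.zero_apply, sub_eq_zero] at this
  exact this.symm

variable (a' b' : Fin k → MvPolynomial (Fin m) ℚ)
variable (ha' : ∀ i, a' i = elimHom m c (a (j.succAbove i)))
variable (hb' : ∀ i, b' i = elimHom m c (b (j.succAbove i)))

include ha' hb' in
lemma elim_entry (i : Fin k) (δ : Fin k → Bool) :
    elimHom m c (koszulEntry a b (j.succAbove i) (j.insertNth false δ))
      = koszulEntry a' b' i δ := by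
  rw [koszulEntry, koszulEntry, Fin.insertNth_apply_succAbove]
  split
  · exact (hb' i).symm
  · exact (ha' i).symm

include hbj ha' hb' in
lemma chain_map (f : (Fin (k + 1) → Bool) → R) :
    elimPhi m k c j (koszulD a b f) = koszulD a' b' (elimPhi m k c j f) := by
  funext γ
  show elimHom m c (koszulD a b f (j.insertNth false γ)) = _
  rw [koszulD_apply, map_sum, Fin.sum_univ_succAbove
    (fun i => elimHom m c (koszulSign R i (flipAt i (j.insertNth false γ)) *
      koszulEntry a b i (flipAt i (j.insertNth false γ)) *
      f (flipAt i (j.insertNth false γ)))) j]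
  have hj0 : elimHom m c (koszulSign R j (flipAt j (j.insertNth false γ)) *
      koszulEntry a b j (flipAt j (j.insertNth false γ)) *
      f (flipAt j (j.insertNth false γ))) = 0 := by
    have he : koszulEntry a b j (flipAt j (j.insertNth false γ)) = b j := by
      rw [flipAt_insertNth_same, koszulEntry, Fin.insertNth_apply_same, if_pos rfl]
    rw [map_mul, map_mul, he, hbj, elim_w, mul_zero, zero_mul]
  rw [hj0, zero_add, koszulD_apply]
  apply Finset.sum_congr rfl
  intro i _
  rw [flipAt_insertNth, map_mul, map_mul, elim_koszulSign,
    koszulSign_insertNth, elim_entry m k c j a b a' b' ha' hb']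
  rfl

end Specific

lemma mem_gradedPart {R : Type*} [CommRing R] {k : ℕ} {p : ZMod 2}
    {f : (Fin k → Bool) → R} : f ∈ gradedPart R p ↔ ∀ ε, bparity ε ≠ p → f ε = 0 :=
  Iff.rfl

lemma zmod2_p11 (p : ZMod 2) : p + 1 + 1 = p := by
  rw [add_assoc, show (1 + 1 : ZMod 2) = 0 by decide, add_zero]

/-- elimination of a variable, `b`-entry linear.
Let `R = ℚ[z₁,…,z_{m+1}]`, `R' = ℚ[z₂,…,z_{m+1}]`, and let `a, b : Fin (k+1) → R`
with `Σᵢ aᵢbᵢ = 0` and `bⱼ = z₁ − c` where `c ∈ R'`.  Let `π : R → R'` be the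
`ℚ`-algebra map with `π(z₁) = c` fixing the other variables, and let `M'` be the folded
Koszul complex over `R'` with rows `(π(aᵢ), π(bᵢ))` for `i ≠ j`.  Then
`Σ_{i≠j} π(aᵢ)π(bᵢ) = 0`, and the map `Φ` is additive, `R'`-linear (for the `R'`-module
structure on `K(a,b)` coming from `R' ↪ R`), a chain map of `ℤ/2`-graded complexes
(it commutes with the differentials and preserves the grading), and a
quasi-isomorphism: it induces isomorphisms of `R'`-modules on homology in both
`ℤ/2`-degrees (injectivity and surjectivity of the induced map on homology are the
last two conjuncts). -/
theorem variable_elimination_quasi_iso (m k : ℕ)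
    (a b : Fin (k + 1) → MvPolynomial (Fin (m + 1)) ℚ)
    (hab : ∑ i, a i * b i = 0)
    (j : Fin (k + 1)) (c : MvPolynomial (Fin m) ℚ)
    (hbj : b j = MvPolynomial.X 0 - MvPolynomial.rename Fin.succ c)
    (a' b' : Fin k → MvPolynomial (Fin m) ℚ)
    (ha' : ∀ i, a' i = elimHom m c (a (j.succAbove i)))
    (hb' : ∀ i, b' i = elimHom m c (b (j.succAbove i))) :
    (∑ i, a' i * b' i = 0) ∧
    (∀ f g, elimPhi m k c j (f + g) = elimPhi m k c j f + elimPhi m k c j g) ∧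
    (∀ (r : MvPolynomial (Fin m) ℚ) f,
        elimPhi m k c j (MvPolynomial.rename Fin.succ r • f) = r • elimPhi m k c j f) ∧
    (∀ f, elimPhi m k c j (koszulD a b f) = koszulD a' b' (elimPhi m k c j f)) ∧
    (∀ (p : ZMod 2) f, f ∈ gradedPart (MvPolynomial (Fin (m + 1)) ℚ) p →
        elimPhi m k c j f ∈ gradedPart (MvPolynomial (Fin m) ℚ) p) ∧
    (∀ (p : ZMod 2) f, f ∈ koszulCycles a b p →
        elimPhi m k c j f ∈ koszulBoundaries a' b' p → f ∈ koszulBoundaries a b p) ∧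
    (∀ (p : ZMod 2) g, g ∈ koszulCycles a' b' p →
        ∃ f ∈ koszulCycles a b p, elimPhi m k c j f - g ∈ koszulBoundaries a' b' p) := by
  have hπbj : elimHom m c (b j) = 0 := by rw [hbj]; exact elim_w m c
  -- the lifting map σ
  let σ : ((Fin k → Bool) → MvPolynomial (Fin m) ℚ) →
      ((Fin (k + 1) → Bool) → MvPolynomial (Fin (m + 1)) ℚ) := fun g η =>
    if η j = false then MvPolynomial.rename Fin.succ (g (fun i => η (j.succAbove i))) else 0
  have hσΦ : ∀ g, elimPhi m k c j (σ g) = g := by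
    intro g
    funext γ
    show elimHom m c (σ g (j.insertNth false γ)) = g γ
    have h1 : (j.insertNth false γ : Fin (k+1) → Bool) j = false := by simp
    have h2 : (fun i => (j.insertNth false γ : Fin (k+1) → Bool) (j.succAbove i)) = γ := by
      funext i; exact Fin.insertNth_apply_succAbove (α := fun _ => Bool) j false γ i
    simp only [σ, h1, if_pos rfl, h2]
    exact elim_rename m c _
  have hσgr : ∀ (q : ZMod 2) g, g ∈ gradedPart (MvPolynomial (Fin m) ℚ) q →
      σ g ∈ gradedPart (MvPolynomial (Fin (m + 1)) ℚ) q := by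
    intro q g hg η hη
    show (if η j = false then _ else _) = 0
    by_cases hηj : η j = false
    · rw [if_pos hηj]
      have h2 : bparity (fun i => η (j.succAbove i)) = bparity η := by
        conv_rhs => rw [← insertNth_false_comp j η hηj]
        rw [bparity_insertNth_false]
      rw [hg _ (h2.symm ▸ hη), map_zero]
    · rw [if_neg hηj]
  -- Φ is additive / subtractive
  have hΦsub : ∀ f g, elimPhi m k c j (f - g) = elimPhi m k c j f - elimPhi m k c j g := by
    intro f g
    funext γ
    show elimHom m c ((f - g) (j.insertNth false γ)) = _
    rw [Pi.sub_apply, map_sub]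
    rfl
  -- membership in ker Φ from elimPhi = 0
  have hkerN : ∀ f : (Fin (k + 1) → Bool) → MvPolynomial (Fin (m + 1)) ℚ,
      elimPhi m k c j f = 0 → ∀ η, η j = false → elimHom m c (f η) = 0 := by
    intro f hf η hη
    have := congrFun hf (fun i => η (j.succAbove i))
    rw [Pi.zero_apply] at this
    rw [← insertNth_false_comp j η hη]
    exact this
  have hchain : ∀ f, elimPhi m k c j (koszulD a b f) = koszulD a' b' (elimPhi m k c j f) :=
    chain_map m k c j a b hbj a' b' ha' hb'
  have hΦgr : ∀ (p : ZMod 2) f, f ∈ gradedPart (MvPolynomial (Fin (m + 1)) ℚ) p →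
      elimPhi m k c j f ∈ gradedPart (MvPolynomial (Fin m) ℚ) p := by
    intro p f hf γ hγ
    show elimHom m c (f (j.insertNth false γ)) = 0
    rw [hf _ (by rw [bparity_insertNth_false]; exact hγ), map_zero]
  refine ⟨?_, ?_, ?_, hchain, hΦgr, ?_, ?_⟩
  -- 1 : sum a' b' = 0
  · have h1 : ∑ i : Fin (k + 1), elimHom m c (a i * b i) = 0 := by
      rw [← map_sum, hab, map_zero]
    rw [Fin.sum_univ_succAbove (fun i => elimHom m c (a i * b i)) j] at h1
    rw [map_mul, hπbj, mul_zero, zero_add] at h1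
    calc ∑ i, a' i * b' i
        = ∑ i : Fin k, elimHom m c (a (j.succAbove i) * b (j.succAbove i)) := by
          apply Finset.sum_congr rfl
          intro i _
          rw [ha' i, hb' i, map_mul]
      _ = 0 := h1
  -- 2 : additivity
  · intro f g
    funext γ
    show elimHom m c ((f + g) (j.insertNth false γ)) = _
    rw [Pi.add_apply, map_add]
    rfl
  -- 3 : semilinearity
  · intro r f
    funext γ
    show elimHom m c ((MvPolynomial.rename Fin.succ r • f) (j.insertNth false γ)) = _
    rw [Pi.smul_apply, smul_eq_mul, map_mul, elim_rename m c r]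
    rfl
  -- 6 : injectivity on homology
  · intro p f hf hΦf
    obtain ⟨hfker, hfgr⟩ := Submodule.mem_inf.mp hf
    have hfd : koszulD a b f = 0 := LinearMap.mem_ker.mp hfker
    obtain ⟨g, hggr, hgd⟩ := Submodule.mem_map.mp hΦf
    -- u := f - d (σ g)
    set u := f - koszulD a b (σ g) with hu
    have hΦu : elimPhi m k c j u = 0 := by
      rw [hu, hΦsub, hchain, hσΦ, hgd, sub_self]
    have huN : ∀ η, η j = false → elimHom m c (u η) = 0 := hkerN u hΦu
    have hud : koszulD a b u = 0 := by
      rw [hu, map_sub, hfd, koszulD_koszulD a b hab, sub_zero]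
    have hugr : ∀ η, bparity η ≠ p → u η = 0 := by
      intro η hη
      show f η - koszulD a b (σ g) η = 0
      rw [hfgr η hη, koszulD_graded a b (hσgr (p + 1) g hggr) η
        (by rw [zmod2_p11]; exact hη), sub_self]
    obtain ⟨h, hh1, hh2, hh3⟩ := N_acyclic m k c j a b hbj hab p u huN hud hugr
    refine Submodule.mem_map.mpr ⟨σ g + h, ?_, ?_⟩
    · exact Submodule.add_mem _ (hσgr (p + 1) g hggr) hh2
    · rw [map_add, hh3, hu]
      funext η
      show koszulD a b (σ g) η + (f η - koszulD a b (σ g) η) = f η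
      ring
  -- 7 : surjectivity on homology
  · intro p g hg
    obtain ⟨hgker, hggr⟩ := Submodule.mem_inf.mp hg
    have hgd : koszulD a' b' g = 0 := LinearMap.mem_ker.mp hgker
    have hσgp := hσgr p g hggr
    have hΦdσ : elimPhi m k c j (koszulD a b (σ g)) = 0 := by
      rw [hchain, hσΦ, hgd]
    have hdN : ∀ η, η j = false → elimHom m c (koszulD a b (σ g) η) = 0 :=
      hkerN _ hΦdσ
    have hdd : koszulD a b (koszulD a b (σ g)) = 0 := koszulD_koszulD a b hab _
    have hdgr : ∀ η, bparity η ≠ p + 1 → koszulD a b (σ g) η = 0 :=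
      koszulD_graded a b hσgp
    obtain ⟨h, hh1, hh2, hh3⟩ :=
      N_acyclic m k c j a b hbj hab (p + 1) (koszulD a b (σ g)) hdN hdd hdgr
    refine ⟨σ g - h, ?_, ?_⟩
    · apply Submodule.mem_inf.mpr
      constructor
      · apply LinearMap.mem_ker.mpr
        rw [map_sub, hh3, sub_self]
      · intro η hη
        show σ g η - h η = 0
        rw [hσgp η hη, hh2 η (by rw [zmod2_p11]; exact hη), sub_self]
    · have hΦh : elimPhi m k c j h = 0 := by
        funext γ
        show elimHom m c (h (j.insertNth false γ)) = 0
        rw [hh1 _ (Fin.insertNth_apply_same (α := fun _ => Bool) j false γ), map_zero]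
      have : elimPhi m k c j (σ g - h) - g = 0 := by
        rw [hΦsub, hσΦ, hΦh, sub_zero, sub_self]
      rw [this]
      exact Submodule.zero_mem _
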